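/- Let r ≥ 0 be an integer and work over ℚ in N variables. As formal power series in t with coefficients in the polynomial ring, r! · E(t) · ∑_{n≥r} p_n^{(r)} (−1)^{n−r} t^{n−r} = D^r E(t), where D^r is the r-th formal derivative with respect to t. -/

import Mathlib

open MvPolynomial PowerSeries

/-- `p_n^{(r)}`: the sum of the monomial symmetric polynomials `m_λ` over the
partitions `λ` of `n` of length `r` (in `N` variables, over `ℚ`).
For `r = 0` this automatically gives `δ_{n,0}`. -/
noncomputable def pnr (N n r : ℕ) : MvPolynomial (Fin N) ℚ :=
  ∑ μ ∈ Finset.univ.filter (fun μ : Nat.Partition n => μ.parts.card = r),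
    msymm (Fin N) ℚ μ

/-- `E(t) = ∑_{m ≥ 0} e_m t^m`, as a formal power series with coefficients in
the polynomial ring in `N` variables over `ℚ`. -/
noncomputable def Eser (N : ℕ) : PowerSeries (MvPolynomial (Fin N) ℚ) :=
  PowerSeries.mk fun m => esymm (Fin N) ℚ m

/-- The finset of all multisets over `Fin N` of cardinality `n`. -/
noncomputable def MSet (N n : ℕ) : Finset (Multiset (Fin N)) :=
  Finset.univ.image (Sym.toMultiset : Sym (Fin N) n → Multiset (Fin N))

lemma mem_MSet {N n : ℕ} {u : Multiset (Fin N)} :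
    u ∈ MSet N n ↔ Multiset.card u = n := by
  constructor
  · rintro h
    rw [MSet, Finset.mem_image] at h
    obtain ⟨s, -, rfl⟩ := h
    exact s.2
  · intro h
    rw [MSet, Finset.mem_image]
    exact ⟨⟨u, h⟩, Finset.mem_univ _, rfl⟩

lemma count_finset_val {α : Type*} [DecidableEq α] (B : Finset α) (i : α) :
    B.val.count i = if i ∈ B then 1 else 0 := by
  rw [Multiset.count_eq_of_nodup B.nodup]
  rfl

lemma finset_val_le_of_subset {α : Type*} [DecidableEq α] {u : Multiset α} {A : Finset α}
    (h : A ⊆ u.toFinset) : A.val ≤ u :=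
  le_trans (Finset.val_le_iff.mpr h) (by rw [Multiset.toFinset_val]; exact Multiset.dedup_le u)

lemma mem_sub_toFinset {α : Type*} [DecidableEq α] (u : Multiset α) (A : Finset α) (i : α) :
    i ∈ (u - A.val).toFinset ↔ A.val.count i < u.count i := by
  rw [Multiset.mem_toFinset, ← Multiset.count_pos, Multiset.count_sub]
  omega

lemma ofSym_parts_card {N n : ℕ} (s : Sym (Fin N) n) :
    (Nat.Partition.ofSym s).parts.card = s.toMultiset.toFinset.card := by
  simp [Nat.Partition.ofSym, Multiset.toFinset]

lemma pnr_eq (N n r : ℕ) :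
    pnr N n r = ∑ u ∈ (MSet N n).filter (fun u => u.toFinset.card = r),
      (u.map (MvPolynomial.X : Fin N → MvPolynomial (Fin N) ℚ)).prod := by
  rw [pnr]
  have h1 : ∀ μ : Nat.Partition n, msymm (Fin N) ℚ μ =
      ∑ s ∈ Finset.univ.filter (fun s : Sym (Fin N) n => Nat.Partition.ofSym s = μ),
        (s.toMultiset.map (MvPolynomial.X : Fin N → MvPolynomial (Fin N) ℚ)).prod := by
    intro μ
    rw [msymm]
    symm
    apply Finset.sum_subtype
    intro x
    simp
  rw [Finset.sum_congr rfl (fun μ _ => h1 μ)]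
  rw [Finset.sum_fiberwise_eq_sum_filter]
  have h2 : (Finset.univ.filter
      (fun s : Sym (Fin N) n => Nat.Partition.ofSym s ∈ Finset.univ.filter
        (fun μ : Nat.Partition n => μ.parts.card = r))) =
      Finset.univ.filter (fun s : Sym (Fin N) n => s.toMultiset.toFinset.card = r) := by
    apply Finset.filter_congr
    intro s _
    simp [ofSym_parts_card]
  rw [h2, MSet, Finset.filter_image]
  rw [Finset.sum_image (fun a _ b _ h => Sym.coe_injective h)]

lemma esymm_eq (N n : ℕ) :
    esymm (Fin N) ℚ n = ∑ u ∈ (MSet N n).filter (fun u => u.Nodup),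
      (u.map (MvPolynomial.X : Fin N → MvPolynomial (Fin N) ℚ)).prod := by
  rw [esymm]
  refine Finset.sum_bij' (fun t _ => t.val) (fun u _ => u.toFinset) ?_ ?_ ?_ ?_ ?_
  · intro t ht
    rw [Finset.mem_powersetCard] at ht
    rw [Finset.mem_filter, mem_MSet]
    exact ⟨ht.2, t.nodup⟩
  · intro u hu
    rw [Finset.mem_filter, mem_MSet] at hu
    rw [Finset.mem_powersetCard]
    exact ⟨Finset.subset_univ _, by rw [Multiset.toFinset_card_eq_card_iff_nodup.mpr hu.2, hu.1]⟩
  · intro t ht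
    exact Finset.val_toFinset t
  · intro u hu
    rw [Finset.mem_filter, mem_MSet] at hu
    show u.toFinset.val = u
    rw [Multiset.toFinset_val, Multiset.dedup_eq_self.mpr hu.2]
  · intro t ht
    rfl

lemma innerSignSum (m r : ℕ) (u : Multiset (Fin N)) (hu : Multiset.card u = m + r) :
    ∑ A ∈ u.toFinset.powerset.filter (fun A => (u - A.val).toFinset.card = r),
      ((-1 : MvPolynomial (Fin N) ℚ) ^ A.card)
    = if u.Nodup then ((-1) ^ m * ((m+r).choose r : MvPolynomial (Fin N) ℚ)) else 0 := by
  by_cases hnd : u.Nodup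
  · rw [if_pos hnd]
    have hcardT : u.toFinset.card = m + r := by
      rw [Multiset.toFinset_card_eq_card_iff_nodup.mpr hnd, hu]
    have hset : u.toFinset.powerset.filter (fun A => (u - A.val).toFinset.card = r)
        = Finset.powersetCard m u.toFinset := by
      ext A
      rw [Finset.mem_filter, Finset.mem_powerset, Finset.mem_powersetCard]
      constructor
      · rintro ⟨hA, hcond⟩
        refine ⟨hA, ?_⟩
        have hle := finset_val_le_of_subset hA
        have hnd2 : (u - A.val).Nodup := Multiset.nodup_of_le (Multiset.sub_le_self _ _) hnd
        rw [Multiset.toFinset_card_eq_card_iff_nodup.mpr hnd2, Multiset.card_sub hle] at hcond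
        have hAcard : A.card ≤ m + r := hcardT ▸ Finset.card_le_card hA
        have : (A.val.card : ℕ) = A.card := rfl
        omega
      · rintro ⟨hA, hcard⟩
        refine ⟨hA, ?_⟩
        have hle := finset_val_le_of_subset hA
        have hnd2 : (u - A.val).Nodup := Multiset.nodup_of_le (Multiset.sub_le_self _ _) hnd
        rw [Multiset.toFinset_card_eq_card_iff_nodup.mpr hnd2, Multiset.card_sub hle]
        have : (A.val.card : ℕ) = A.card := rfl
        omega
    rw [hset]
    rw [Finset.sum_congr rfl (fun A hA => by
      rw [(Finset.mem_powersetCard.mp hA).2])]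
    rw [Finset.sum_const, Finset.card_powersetCard, hcardT, nsmul_eq_mul, mul_comm,
      Nat.choose_symm_add]
  · rw [if_neg hnd]
    obtain ⟨i₀, hi₀⟩ : ∃ i, 2 ≤ u.count i := by
      by_contra h
      push_neg at h
      exact hnd (Multiset.nodup_iff_count_le_one.mpr (fun a => by have := h a; omega))
    apply Finset.sum_involution
      (g := fun A _ => if i₀ ∈ A then A.erase i₀ else insert i₀ A)
    · intro A hA
      by_cases h : i₀ ∈ A
      · rw [if_pos h]
        have : A.card = (A.erase i₀).card + 1 := (Finset.card_erase_add_one h).symm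
        rw [this, pow_succ]
        ring
      · rw [if_neg h, Finset.card_insert_of_notMem h, pow_succ]
        ring
    · intro A hA _
      by_cases h : i₀ ∈ A
      · rw [if_pos h]
        intro hc
        exact (hc ▸ Finset.notMem_erase i₀ A) h
      · rw [if_neg h]
        intro hc
        exact h (hc ▸ Finset.mem_insert_self i₀ A)
    · intro A hA
      by_cases h : i₀ ∈ A
      · rw [if_pos h, if_neg (Finset.notMem_erase i₀ A), Finset.insert_erase h]
      · rw [if_neg h, if_pos (Finset.mem_insert_self i₀ A), Finset.erase_insert h]
    · intro A hA
      rw [Finset.mem_filter, Finset.mem_powerset] at hA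
      obtain ⟨hsub, hcond⟩ := hA
      have hi₀T : i₀ ∈ u.toFinset := Multiset.mem_toFinset.mpr (Multiset.count_pos.mp (by omega))
      have hsets : ∀ B : Finset (Fin N), B ⊆ u.toFinset →
          ((i₀ ∈ B → True)) → (∀ i, i ≠ i₀ → (i ∈ B ↔ i ∈ A)) → (i₀ ∈ u.toFinset) →
          (u - B.val).toFinset = (u - A.val).toFinset := by
        intro B hB _ hBiff _
        ext i
        rw [mem_sub_toFinset, mem_sub_toFinset]
        by_cases hii : i = i₀
        · subst hii
          rw [count_finset_val, count_finset_val]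
          split <;> split <;> omega
        · rw [count_finset_val, count_finset_val, if_congr (hBiff i hii) rfl rfl]
      rw [Finset.mem_filter, Finset.mem_powerset]
      by_cases h : i₀ ∈ A
      · rw [if_pos h]
        constructor
        · exact Finset.Subset.trans (Finset.erase_subset i₀ A) hsub
        · rw [hsets (A.erase i₀) (Finset.Subset.trans (Finset.erase_subset i₀ A) hsub)
            (fun _ => trivial) (fun i hi => by simp [Finset.mem_erase, hi]) hi₀T]
          exact hcond
      · rw [if_neg h]
        constructor
        · exact Finset.insert_subset hi₀T hsub
        · rw [hsets (insert i₀ A) (Finset.insert_subset hi₀T hsub)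
            (fun _ => trivial) (fun i hi => by simp [Finset.mem_insert, hi]) hi₀T]
          exact hcond

lemma sigma_eq {N : ℕ} (m r : ℕ) :
    ∑ x ∈ (Finset.HasAntidiagonal.antidiagonal m).sigma (fun p => (Finset.powersetCard p.1 Finset.univ) ×ˢ
        ((MSet N (p.2 + r)).filter fun u => u.toFinset.card = r)),
      ((-1 : MvPolynomial (Fin N) ℚ) ^ x.1.2 *
        ((x.2.1.val + x.2.2).map (MvPolynomial.X : Fin N → MvPolynomial (Fin N) ℚ)).prod)
    = ∑ y ∈ (MSet N (m + r)).sigma (fun u =>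
        u.toFinset.powerset.filter (fun A => (u - A.val).toFinset.card = r)),
      ((-1 : MvPolynomial (Fin N) ℚ) ^ m * (-1) ^ y.2.card *
        (y.1.map (MvPolynomial.X : Fin N → MvPolynomial (Fin N) ℚ)).prod) := by
  refine Finset.sum_bij' (fun x _ => (⟨x.2.1.val + x.2.2, x.2.1⟩ : Σ _ : Multiset (Fin N), Finset (Fin N)))
    (fun y _ => (⟨(y.2.card, m - y.2.card), (y.2, y.1 - y.2.val)⟩ :
      Σ _ : ℕ × ℕ, Finset (Fin N) × Multiset (Fin N))) ?_ ?_ ?_ ?_ ?_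
  · -- forward membership
    rintro ⟨p, A, u'⟩ hx
    dsimp only at hx ⊢
    rw [Finset.mem_sigma, Finset.HasAntidiagonal.mem_antidiagonal, Finset.mem_product,
      Finset.mem_powersetCard, Finset.mem_filter, mem_MSet] at hx
    dsimp only at hx
    obtain ⟨hp, ⟨-, hAcard⟩, hu'card, hu'supp⟩ := hx
    rw [Finset.mem_sigma, mem_MSet, Finset.mem_filter, Finset.mem_powerset]
    dsimp only
    refine ⟨?_, ?_, ?_⟩
    · rw [Multiset.card_add, hu'card]
      have : Multiset.card A.val = A.card := rfl
      have : A.card = p.1 := hAcard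
      omega
    · intro i hi
      rw [Multiset.mem_toFinset, Multiset.mem_add]
      exact Or.inl (Finset.mem_def.mp hi)
    · rw [add_tsub_cancel_left, hu'supp]
  · -- backward membership
    rintro ⟨u, A⟩ hy
    dsimp only at hy ⊢
    rw [Finset.mem_sigma, mem_MSet, Finset.mem_filter, Finset.mem_powerset] at hy
    dsimp only at hy
    obtain ⟨hucard, hsub, hcond⟩ := hy
    have hle := finset_val_le_of_subset hsub
    have hAv : (Multiset.card A.val : ℕ) = A.card := rfl
    have hsubcard : Multiset.card (u - A.val) = (m + r) - A.card := by
      rw [Multiset.card_sub hle, hucard, hAv]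
    have hAm : A.card ≤ m := by
      have h1 := Multiset.toFinset_card_le (u - A.val)
      have h2 : A.card ≤ Multiset.card u := by
        calc A.card = Multiset.card A.val := rfl
        _ ≤ Multiset.card u := Multiset.card_le_card hle
      rw [hcond] at h1
      rw [hsubcard] at h1
      omega
    rw [Finset.mem_sigma, Finset.HasAntidiagonal.mem_antidiagonal, Finset.mem_product,
      Finset.mem_powersetCard, Finset.mem_filter, mem_MSet]
    dsimp only
    exact ⟨by omega, ⟨Finset.subset_univ _, rfl⟩, by rw [hsubcard]; omega, hcond⟩
  · -- left inverse
    rintro ⟨p, A, u'⟩ hx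
    dsimp only at hx ⊢
    rw [Finset.mem_sigma, Finset.HasAntidiagonal.mem_antidiagonal, Finset.mem_product,
      Finset.mem_powersetCard, Finset.mem_filter, mem_MSet] at hx
    dsimp only at hx
    obtain ⟨hp, ⟨-, hAcard⟩, hu'card, -⟩ := hx
    refine Sigma.ext ?_ ?_
    · show (A.card, m - A.card) = p
      have : A.card = p.1 := hAcard
      refine Prod.ext ?_ ?_ <;> simp <;> omega
    · show HEq (A, A.val + u' - A.val) (A, u')
      rw [add_tsub_cancel_left]
  · -- right inverse
    rintro ⟨u, A⟩ hy
    dsimp only at hy ⊢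
    rw [Finset.mem_sigma, mem_MSet, Finset.mem_filter, Finset.mem_powerset] at hy
    dsimp only at hy
    obtain ⟨hucard, hsub, hcond⟩ := hy
    have hle := finset_val_le_of_subset hsub
    refine Sigma.ext ?_ ?_
    · show A.val + (u - A.val) = u
      rw [add_comm, tsub_add_cancel_of_le hle]
    · show HEq A A
      rfl
  · -- terms agree
    rintro ⟨p, A, u'⟩ hx
    dsimp only at hx ⊢
    rw [Finset.mem_sigma, Finset.HasAntidiagonal.mem_antidiagonal, Finset.mem_product,
      Finset.mem_powersetCard, Finset.mem_filter, mem_MSet] at hx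
    dsimp only at hx
    obtain ⟨hp, ⟨-, hAcard⟩, -, -⟩ := hx
    show _ = (-1 : MvPolynomial (Fin N) ℚ) ^ m * (-1) ^ A.card * _
    have hsign : ((-1 : MvPolynomial (Fin N) ℚ)) ^ p.2 = (-1) ^ m * (-1) ^ A.card := by
      have h1 : ((-1 : MvPolynomial (Fin N) ℚ)) ^ m = (-1) ^ p.1 * (-1) ^ p.2 := by
        rw [← pow_add, hp]
      rw [h1, hAcard]
      have h2 : ((-1 : MvPolynomial (Fin N) ℚ)) ^ p.1 * (-1) ^ p.1 = 1 := by
        rw [← pow_add, Even.neg_one_pow ⟨p.1, rfl⟩]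
      calc ((-1 : MvPolynomial (Fin N) ℚ)) ^ p.2
          = ((-1) ^ p.1 * (-1) ^ p.1) * (-1) ^ p.2 := by rw [h2, one_mul]
        _ = (-1) ^ p.1 * (-1) ^ p.2 * (-1) ^ p.1 := by ring
    rw [hsign]

lemma key (N m r : ℕ) :
    ∑ p ∈ Finset.HasAntidiagonal.antidiagonal m,
      esymm (Fin N) ℚ p.1 * ((-1 : MvPolynomial (Fin N) ℚ) ^ p.2 * pnr N (p.2 + r) r)
    = ((m+r).choose r : MvPolynomial (Fin N) ℚ) * esymm (Fin N) ℚ (m+r) := by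
  have step1 : ∀ p : ℕ × ℕ,
      esymm (Fin N) ℚ p.1 * ((-1 : MvPolynomial (Fin N) ℚ) ^ p.2 * pnr N (p.2 + r) r)
      = ∑ q ∈ (Finset.powersetCard p.1 Finset.univ) ×ˢ
          ((MSet N (p.2 + r)).filter fun u => u.toFinset.card = r),
        ((-1 : MvPolynomial (Fin N) ℚ) ^ p.2 *
          ((q.1.val + q.2).map (MvPolynomial.X : Fin N → MvPolynomial (Fin N) ℚ)).prod) := by
    intro p
    rw [pnr_eq, esymm, Finset.mul_sum, Finset.sum_product]
    rw [Finset.sum_mul_sum]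
    apply Finset.sum_congr rfl
    intro A _
    apply Finset.sum_congr rfl
    intro u' _
    rw [Multiset.map_add, Multiset.prod_add]
    have : (∏ i ∈ A, MvPolynomial.X i : MvPolynomial (Fin N) ℚ)
        = (A.val.map (MvPolynomial.X : Fin N → MvPolynomial (Fin N) ℚ)).prod := rfl
    rw [this]
    ring
  rw [Finset.sum_congr rfl (fun p _ => step1 p), Finset.sum_sigma', sigma_eq,
    Finset.sum_sigma]
  have step2 : ∀ u ∈ MSet N (m + r),
      (∑ A ∈ u.toFinset.powerset.filter (fun A => (u - A.val).toFinset.card = r),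
        ((-1 : MvPolynomial (Fin N) ℚ) ^ m * (-1) ^ A.card *
          (u.map (MvPolynomial.X : Fin N → MvPolynomial (Fin N) ℚ)).prod))
      = (if u.Nodup then ((m+r).choose r : MvPolynomial (Fin N) ℚ) *
          (u.map (MvPolynomial.X : Fin N → MvPolynomial (Fin N) ℚ)).prod else 0) := by
    intro u hu
    have h1 : ∀ A : Finset (Fin N),
        ((-1 : MvPolynomial (Fin N) ℚ) ^ m * (-1) ^ A.card *
          (u.map (MvPolynomial.X : Fin N → MvPolynomial (Fin N) ℚ)).prod)
        = ((-1 : MvPolynomial (Fin N) ℚ) ^ A.card) * ((-1) ^ m *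
          (u.map (MvPolynomial.X : Fin N → MvPolynomial (Fin N) ℚ)).prod) := by
      intro A; ring
    rw [Finset.sum_congr rfl (fun A _ => h1 A), ← Finset.sum_mul,
      innerSignSum m r u (mem_MSet.mp hu)]
    split
    · have : ((-1 : MvPolynomial (Fin N) ℚ) ^ m * (-1) ^ m) = 1 := by
        rw [← pow_add]; exact Even.neg_one_pow ⟨m, rfl⟩
      calc ((-1 : MvPolynomial (Fin N) ℚ) ^ m * ((m+r).choose r : MvPolynomial (Fin N) ℚ)) *
            ((-1) ^ m * (u.map MvPolynomial.X).prod)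
          = ((-1 : MvPolynomial (Fin N) ℚ) ^ m * (-1) ^ m) * (((m+r).choose r : MvPolynomial (Fin N) ℚ) * (u.map MvPolynomial.X).prod) := by ring
        _ = _ := by rw [this, one_mul]
    · rw [zero_mul]
  rw [Finset.sum_congr rfl step2, Finset.sum_ite, Finset.sum_const_zero, add_zero,
    ← Finset.mul_sum, esymm_eq]

lemma coeff_iter_deriv {R : Type*} [CommRing R] (f : PowerSeries R) (r : ℕ) :
    ∀ m : ℕ, PowerSeries.coeff m (PowerSeries.derivativeFun^[r] f)
      = ((m+r).descFactorial r : R) * PowerSeries.coeff (m+r) f := by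
  induction r with
  | zero => intro m; simp
  | succ r ih =>
    intro m
    rw [Function.iterate_succ_apply', show ∀ g : PowerSeries R, g.derivativeFun = PowerSeries.derivative R g from fun _ => rfl,
      PowerSeries.coeff_derivative, ih (m+1)]
    have h1 : m + 1 + r = m + (r + 1) := by omega
    have h2 : (m + (r+1)).descFactorial (r+1) = (m + 1) * ((m + 1 + r).descFactorial r) := by
      rw [h1] at *
      have := Nat.descFactorial_succ (m + (r+1)) r
      rw [this]
      congr 1
      omega
    rw [h1, h2]
    push_cast
    ring

/-- `r! · E(t) · ∑_{n≥r} p_n^{(r)} (−1)^{n−r} t^{n−r} = D^r E(t)`,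
where `D` is the formal derivative with respect to `t` and the series
`∑_{n≥r} p_n^{(r)} (−1)^{n−r} t^{n−r}` is written as `∑_{m≥0} (−1)^m p_{m+r}^{(r)} t^m`. -/
theorem factorial_mul_E_mul_genfun_eq_deriv (N r : ℕ) :
    (r.factorial : PowerSeries (MvPolynomial (Fin N) ℚ)) * Eser N *
        (PowerSeries.mk fun m => (-1 : MvPolynomial (Fin N) ℚ) ^ m * pnr N (m + r) r) =
      PowerSeries.derivativeFun^[r] (Eser N) := by
  ext m : 1
  rw [coeff_iter_deriv, mul_assoc]
  have hc : (r.factorial : PowerSeries (MvPolynomial (Fin N) ℚ))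
      = PowerSeries.C (r.factorial : MvPolynomial (Fin N) ℚ) := by
    rw [map_natCast]
  rw [hc, PowerSeries.coeff_C_mul, PowerSeries.coeff_mul]
  have : ∀ p ∈ Finset.HasAntidiagonal.antidiagonal m,
      (PowerSeries.coeff p.1 (Eser N)) *
        (PowerSeries.coeff p.2
          (PowerSeries.mk fun m => (-1 : MvPolynomial (Fin N) ℚ) ^ m * pnr N (m + r) r))
      = esymm (Fin N) ℚ p.1 * ((-1 : MvPolynomial (Fin N) ℚ) ^ p.2 * pnr N (p.2 + r) r) := by
    intro p _
    rw [Eser, PowerSeries.coeff_mk, PowerSeries.coeff_mk]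
  rw [Finset.sum_congr rfl this, key]
  rw [Eser, PowerSeries.coeff_mk]
  rw [Nat.descFactorial_eq_factorial_mul_choose]
  push_cast
  ring
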